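/- For any affine hyperplane H = {x ∈ ℝ^d : hᵀx + b = 0} with h ≠ 0, and any finite set S of N > d points in general position, there exists a subset S_h ⊂ S with |S_h| = d and a hyperplane of parameters (h', b') with ‖h'‖ = 1 passing through all points of S_h, such that for every x ∈ S \ S_h, sign(hᵀx + b) = sign(h'ᵀx + b'). -/

import Mathlib

open Classical in
/-- sign function: 1 if u ≥ 0, -1 otherwise. -/
noncomputable def sgnR (u : ℝ) : ℤ := if 0 ≤ u then 1 else -1

namespace Stmt3Aux

variable {d N : ℕ}

/-- value of the affine functional `w = (g, c)` at point `i` -/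
def Fv (x : Fin N → Fin d → ℝ) (w : (Fin d → ℝ) × ℝ) (i : Fin N) : ℝ :=
  (∑ j, w.1 j * x i j) + w.2

lemma Fv_add_smul (x : Fin N → Fin d → ℝ) (w v : (Fin d → ℝ) × ℝ) (t : ℝ) (i : Fin N) :
    Fv x (w + t • v) i = Fv x w i + t * Fv x v i := by
  simp only [Fv, Prod.fst_add, Prod.snd_add, Prod.smul_fst, Prod.smul_snd, Pi.add_apply,
    Pi.smul_apply, smul_eq_mul, add_mul]
  rw [Finset.sum_add_distrib]
  simp only [mul_add, Finset.mul_sum, mul_assoc]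
  ring

/-- `Fv x · i` as a linear map. -/
noncomputable def lmap (x : Fin N → Fin d → ℝ) (i : Fin N) :
    ((Fin d → ℝ) × ℝ) →ₗ[ℝ] ℝ where
  toFun w := Fv x w i
  map_add' a b := by
    simp only [Fv, Prod.fst_add, Prod.snd_add, Pi.add_apply, add_mul]
    rw [Finset.sum_add_distrib]; ring
  map_smul' c a := by
    simp only [Fv, Prod.smul_fst, Prod.smul_snd, Pi.smul_apply, smul_eq_mul, RingHom.id_apply]
    simp only [mul_add, Finset.mul_sum, mul_assoc]

lemma card_zero_le (x : Fin N → Fin d → ℝ)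
    (hgen : ∀ (h : Fin d → ℝ) (b : ℝ), h ≠ 0 →
      Set.ncard {i : Fin N | (∑ j, h j * x i j) + b = 0} ≤ d)
    (w : (Fin d → ℝ) × ℝ) (hw : w.1 ≠ 0) :
    (Finset.univ.filter fun i => Fv x w i = 0).card ≤ d := by
  have h1 := hgen w.1 w.2 hw
  have h2 : {i : Fin N | (∑ j, w.1 j * x i j) + w.2 = 0}
      = ↑(Finset.univ.filter fun i => Fv x w i = 0) := by
    ext i; simp only [Finset.coe_filter, Finset.mem_univ, true_and, Set.mem_setOf_eq]; rfl
  rwa [h2, Set.ncard_coe_finset] at h1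

lemma key (hdN : d < N) (x : Fin N → Fin d → ℝ)
    (hgen : ∀ (h : Fin d → ℝ) (b : ℝ), h ≠ 0 →
      Set.ncard {i : Fin N | (∑ j, h j * x i j) + b = 0} ≤ d)
    (f : Fin N → ℝ) :
    ∀ n (w : (Fin d → ℝ) × ℝ), w.1 ≠ 0 →
      (∀ i, Fv x w i ≠ 0 → 0 < f i * Fv x w i) →
      d ≤ (Finset.univ.filter fun i => Fv x w i = 0).card + n →
      ∃ w' : (Fin d → ℝ) × ℝ, w'.1 ≠ 0 ∧
        (Finset.univ.filter fun i => Fv x w' i = 0).card = d ∧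
        (∀ i, Fv x w' i ≠ 0 → 0 < f i * Fv x w' i) := by
  intro n
  induction n with
  | zero =>
    intro w hw1 hsign hcard
    exact ⟨w, hw1, le_antisymm (card_zero_le x hgen w hw1) (by simpa using hcard), hsign⟩
  | succ n ih =>
    intro w hw1 hsign hcard
    set Z := Finset.univ.filter fun i => Fv x w i = 0 with hZdef
    by_cases hle : d ≤ Z.card
    · exact ⟨w, hw1, le_antisymm (card_zero_le x hgen w hw1) hle, hsign⟩
    push_neg at hle
    -- find v in the kernel of all functionals on Z, not in span of w
    have hw0 : w ≠ 0 := fun h0 => hw1 (by rw [h0]; rfl)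
    set Φ : ((Fin d → ℝ) × ℝ) →ₗ[ℝ] (↥Z → ℝ) := LinearMap.pi (fun i => lmap x i.1) with hΦdef
    have hrk := LinearMap.finrank_range_add_finrank_ker Φ
    have hV : Module.finrank ℝ ((Fin d → ℝ) × ℝ) = d + 1 := by simp
    have hrange : Module.finrank ℝ (LinearMap.range Φ) ≤ Z.card := by
      calc Module.finrank ℝ (LinearMap.range Φ) ≤ Module.finrank ℝ (↥Z → ℝ) :=
            Submodule.finrank_le _
        _ = Z.card := by simp [Fintype.card_coe]
    have hker2 : 2 ≤ Module.finrank ℝ (LinearMap.ker Φ) := by omega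
    have hnotle : ¬ (LinearMap.ker Φ ≤ Submodule.span ℝ {w}) := by
      intro hle2
      have h1 := Submodule.finrank_mono hle2
      rw [finrank_span_singleton hw0] at h1
      omega
    obtain ⟨v, hvker, hvspan⟩ := SetLike.not_le_iff_exists.mp hnotle
    clear hnotle hrk hker2 hrange
    have hvZ : ∀ i ∈ Z, Fv x v i = 0 := by
      intro i hi
      have := LinearMap.mem_ker.mp hvker
      have := congrFun this ⟨i, hi⟩
      simpa [hΦdef, lmap] using this
    have hv0 : v ≠ 0 := fun h0 => hvspan (h0 ▸ (Submodule.span ℝ {w}).zero_mem)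
    -- some point where v does not vanish
    have hA : ∃ j, Fv x v j ≠ 0 := by
      by_cases hv1 : v.1 = 0
      · have hv2 : v.2 ≠ 0 := by
          intro h2; exact hv0 (Prod.ext hv1 h2)
        exact ⟨⟨0, by omega⟩, by simp [Fv, hv1, hv2]⟩
      · by_contra hall
        push_neg at hall
        have h1 := card_zero_le x hgen v hv1
        have h2 : (Finset.univ.filter fun i => Fv x v i = 0) = Finset.univ := by
          apply Finset.eq_univ_of_forall; intro i; simp [hall i]
        rw [h2, Finset.card_univ, Fintype.card_fin] at h1
        omega
    set A := Finset.univ.filter fun j => Fv x v j ≠ 0 with hAdef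
    have hAne : A.Nonempty := by
      obtain ⟨j, hj⟩ := hA; exact ⟨j, by simp [hAdef, hj]⟩
    have hAnotZ : ∀ j ∈ A, j ∉ Z := by
      intro j hj hjZ
      have := hvZ j hjZ
      simp [hAdef, this] at hj
    have hAw : ∀ j ∈ A, Fv x w j ≠ 0 := by
      intro j hj h0
      exact hAnotZ j hj (by simp [hZdef, h0])
    obtain ⟨j0, hj0A, hj0min⟩ :=
      Finset.exists_min_image A (fun j => |Fv x w j| / |Fv x v j|) hAne
    have hvj0 : Fv x v j0 ≠ 0 := by simpa [hAdef] using hj0A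
    have hwj0 : Fv x w j0 ≠ 0 := hAw j0 hj0A
    set t : ℝ := -(Fv x w j0) / (Fv x v j0) with htdef
    have ht0 : t ≠ 0 := by
      simp [htdef, div_ne_zero_iff, hwj0, hvj0]
    set w' := w + t • v with hw'def
    have hw'Z : ∀ i ∈ Z, Fv x w' i = 0 := by
      intro i hi
      have hwi : Fv x w i = 0 := by simpa [hZdef] using hi
      rw [hw'def, Fv_add_smul, hwi, hvZ i hi]; ring
    have hw'j0 : Fv x w' j0 = 0 := by
      rw [hw'def, Fv_add_smul, htdef]
      field_simp
      ring
    have habs : |t| = |Fv x w j0| / |Fv x v j0| := by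
      rw [htdef, abs_div, abs_neg]
    -- sign preservation
    have hsign' : ∀ i, Fv x w' i ≠ 0 → 0 < f i * Fv x w' i := by
      intro i hi
      have hwi : Fv x w i ≠ 0 := by
        intro h0
        exact hi (hw'Z i (by simp [hZdef, h0]))
      have hfa := hsign i hwi
      have hstep : 0 < Fv x w i * Fv x w' i := by
        by_cases hvi : Fv x v i = 0
        · rw [hw'def, Fv_add_smul, hvi, mul_zero, add_zero]
          exact mul_self_pos.mpr hwi
        · have hiA : i ∈ A := by simp [hAdef, hvi]
          have hq : |t| ≤ |Fv x w i| / |Fv x v i| := habs ▸ hj0min i hiA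
          have hbound : |t * Fv x v i| ≤ |Fv x w i| := by
            rw [abs_mul]
            exact (le_div_iff₀ (abs_pos.mpr hvi)).mp hq
          set a := Fv x w i
          set c := t * Fv x v i
          have hsum : Fv x w' i = a + c := by rw [hw'def, Fv_add_smul]
          rw [hsum]
          obtain ⟨hb1, hb2⟩ := abs_le.mp hbound
          have hne0 : a + c ≠ 0 := hsum ▸ hi
          rcases hwi.lt_or_gt with hneg | hpos
          · have habs2 : |a| = -a := abs_of_neg hneg
            rw [habs2] at hb2
            have hle0 : a + c ≤ 0 := by linarith
            exact mul_pos_of_neg_of_neg hneg (lt_of_le_of_ne hle0 hne0)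
          · have habs2 : |a| = a := abs_of_pos hpos
            rw [habs2] at hb1
            have hge0 : 0 ≤ a + c := by linarith
            exact mul_pos hpos (lt_of_le_of_ne hge0 (Ne.symm hne0))
      have ha2 : 0 < Fv x w i * Fv x w i := mul_self_pos.mpr hwi
      nlinarith [mul_pos hfa hstep]
    -- new normal vector is nonzero
    have hw'1 : w'.1 ≠ 0 := by
      intro h0
      have hw'2 : w'.2 = 0 := by
        have := hw'j0
        simpa [Fv, h0] using this
      have hw'zero : w' = 0 := Prod.ext h0 hw'2
      have : v ∈ Submodule.span ℝ {w} := by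
        rw [Submodule.mem_span_singleton]
        refine ⟨-t⁻¹, ?_⟩
        have : w = -(t • v) := by
          rw [eq_neg_iff_add_eq_zero]; exact hw'zero
        rw [this]
        simp [smul_smul, inv_mul_cancel₀ ht0]
      exact hvspan this
    -- card increases
    have hsubset : insert j0 Z ⊆ Finset.univ.filter fun i => Fv x w' i = 0 := by
      intro i hi
      rcases Finset.mem_insert.mp hi with h1 | h1
      · subst h1; simp [hw'j0]
      · simp [hw'Z i h1]
    have hcard' : Z.card + 1 ≤ (Finset.univ.filter fun i => Fv x w' i = 0).card := by
      have h1 : (insert j0 Z).card = Z.card + 1 :=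
        Finset.card_insert_of_notMem (hAnotZ j0 hj0A)
      calc Z.card + 1 = (insert j0 Z).card := h1.symm
        _ ≤ _ := Finset.card_le_card hsubset
    exact ih w' hw'1 hsign' (by omega)

end Stmt3Aux

open Stmt3Aux in
/-- Any affine classifier on N > d points in general position is equivalent,
on the points outside some d-point subset, to a unit-normal hyperplane passing through
those d points. -/
theorem stmt3 (d N : ℕ) (hdN : d < N) (x : Fin N → (Fin d → ℝ))
    (hgen : ∀ (h : Fin d → ℝ) (b : ℝ), h ≠ 0 →
      Set.ncard {i : Fin N | (∑ j, h j * x i j) + b = 0} ≤ d)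
    (h : Fin d → ℝ) (b : ℝ) (hne : h ≠ 0) :
    ∃ T : Finset (Fin N), T.card = d ∧
      ∃ (h' : Fin d → ℝ) (b' : ℝ), (∑ j, (h' j) ^ 2) = 1 ∧
        (∀ i ∈ T, (∑ j, h' j * x i j) + b' = 0) ∧
        (∀ i ∉ T, sgnR ((∑ j, h j * x i j) + b) = sgnR ((∑ j, h' j * x i j) + b')) := by
  set f : Fin N → ℝ := fun i => (∑ j, h j * x i j) + b with hfdef
  have hf : ∀ i, Fv x (h, b) i = f i := fun i => rfl
  have hinit : ∀ i, Fv x (h, b) i ≠ 0 → 0 < f i * Fv x (h, b) i := by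
    intro i hi
    rw [hf i]; rw [hf i] at hi
    exact mul_self_pos.mpr hi
  obtain ⟨w', hw'1, hw'card, hw'sign⟩ :=
    key hdN x hgen f d (h, b) hne hinit (by omega)
  -- normalize
  set S : ℝ := ∑ j, (w'.1 j) ^ 2 with hSdef
  have hSpos : 0 < S := by
    obtain ⟨j, hj⟩ := Function.ne_iff.mp hw'1
    apply Finset.sum_pos' (fun j _ => sq_nonneg _)
    exact ⟨j, Finset.mem_univ j, lt_of_le_of_ne (sq_nonneg _) (Ne.symm (pow_ne_zero 2 hj))⟩
  set s : ℝ := Real.sqrt S with hsdef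
  have hspos : 0 < s := Real.sqrt_pos.mpr hSpos
  refine ⟨Finset.univ.filter fun i => Fv x w' i = 0, hw'card,
    fun j => w'.1 j / s, w'.2 / s, ?_, ?_, ?_⟩
  · have : ∑ j, (w'.1 j / s) ^ 2 = S / s ^ 2 := by
      rw [hSdef, Finset.sum_div]
      apply Finset.sum_congr rfl
      intro j _; rw [div_pow]
    rw [this, hsdef, Real.sq_sqrt hSpos.le, div_self hSpos.ne']
  · intro i hi
    have hFv : Fv x w' i = 0 := by simpa using hi
    have : (∑ j, w'.1 j / s * x i j) + w'.2 / s = Fv x w' i / s := by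
      rw [Fv, add_div, Finset.sum_div]
      congr 1
      apply Finset.sum_congr rfl
      intro j _; rw [div_mul_eq_mul_div]
    rw [this, hFv, zero_div]
  · intro i hi
    have hFv : Fv x w' i ≠ 0 := by simpa using hi
    have hpos := hw'sign i hFv
    have hval : (∑ j, w'.1 j / s * x i j) + w'.2 / s = Fv x w' i / s := by
      rw [Fv, add_div, Finset.sum_div]
      congr 1
      apply Finset.sum_congr rfl
      intro j _; rw [div_mul_eq_mul_div]
    rw [hval]
    have hfi : f i ≠ 0 := by
      intro h0; rw [h0, zero_mul] at hpos; exact lt_irrefl 0 hpos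
    have hgoal : (∑ j, h j * x i j) + b = f i := rfl
    rw [hgoal]
    rcases hfi.lt_or_gt with hneg | hposf
    · have hFneg : Fv x w' i < 0 := by nlinarith
      have h1 : Fv x w' i / s < 0 := div_neg_of_neg_of_pos hFneg hspos
      simp [sgnR, not_le.mpr hneg, not_le.mpr h1]
    · have hFpos : 0 < Fv x w' i := by nlinarith
      have h1 : 0 < Fv x w' i / s := div_pos hFpos hspos
      simp [sgnR, hposf.le, h1.le]
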